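/- Let A be an invertible n×n matrix, Γ a full rank lattice, and W ⊂ ℝⁿ a measurable set that packs by Γ-translations (∑_{γ∈Γ} 1_W(x+γ) ≤ 1 a.e.). Then there exists a constant C depending only on n such that for all x ∈ ℝⁿ, the Lebesgue measure |B(x,1) ∩ A(W)| ≤ C / #(A^{−1}(B(0,1)) ∩ Γ). -/

import Mathlib

open MeasureTheory
open scoped ENNReal
open scoped Pointwise

/-- If `W` packs by `Γ`-translations, then there is a constant `C` depending only on the
dimension `n` such that for all `x`, `|B(x,1) ∩ A(W)| ≤ C / #(A⁻¹(B(0,1)) ∩ Γ)`. -/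
theorem stmt9 (n : ℕ) :
    ∃ C : ℝ≥0∞, 0 < C ∧ C < ∞ ∧
      ∀ (A L : EuclideanSpace ℝ (Fin n) ≃ₗ[ℝ] EuclideanSpace ℝ (Fin n))
        (Γ : Set (EuclideanSpace ℝ (Fin n))),
        Γ = (Set.range fun k : Fin n → ℤ => L (WithLp.toLp 2 (fun i => (k i : ℝ)))) →
        ∀ W : Set (EuclideanSpace ℝ (Fin n)), MeasurableSet W →
        (∀ᵐ x : EuclideanSpace ℝ (Fin n), {γ ∈ Γ | x + γ ∈ W}.Subsingleton) →
        ∀ x : EuclideanSpace ℝ (Fin n),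
          volume (Metric.ball x 1 ∩ A '' W) ≤
            C / ((A.symm '' Metric.ball 0 1 ∩ Γ).encard : ℝ≥0∞) := by
  set C := volume (Metric.ball (0 : EuclideanSpace ℝ (Fin n)) 2) with hC
  have hC0 : 0 < C := Metric.measure_ball_pos volume 0 (by norm_num)
  have hCtop : C < ∞ := measure_ball_lt_top
  refine ⟨C, hC0, hCtop, ?_⟩
  intro A L Γ hΓ W hW hpack x
  set E := A.symm '' Metric.ball 0 1 ∩ Γ with hE
  set S := Metric.ball x 1 ∩ A '' W with hS
  -- Γ is closed under negation
  have hΓneg : ∀ γ ∈ Γ, -γ ∈ Γ := by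
    intro γ hγ
    rw [hΓ] at hγ ⊢
    obtain ⟨k, hk⟩ := hγ
    refine ⟨-k, ?_⟩
    have harg : (WithLp.toLp 2 (fun i => (((-k) i : ℤ) : ℝ)) : EuclideanSpace ℝ (Fin n)) =
        (-(WithLp.toLp 2 (fun i => ((k i : ℤ) : ℝ))) : EuclideanSpace ℝ (Fin n)) := by
      ext i
      show ((-(k i) : ℤ) : ℝ) = -((k i : ℤ) : ℝ)
      push_cast
      ring
    show L (WithLp.toLp 2 (fun i => (((-k) i : ℤ) : ℝ))) = -γ
    rw [harg, map_neg]
    exact congrArg Neg.neg hk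
  -- measurability of A '' W
  have hAmeas : MeasurableSet (A '' W) := by
    rw [LinearEquiv.image_eq_preimage_symm]
    exact hW.preimage (A.symm.toLinearMap.continuous_of_finiteDimensional).measurable
  have hmeasS : MeasurableSet S := measurableSet_ball.inter hAmeas
  have hStop : volume S < ∞ :=
    lt_of_le_of_lt (measure_mono Set.inter_subset_left) measure_ball_lt_top
  -- translates of W by distinct lattice vectors are a.e. disjoint
  have hnull : ∀ γ₁ ∈ Γ, ∀ γ₂ ∈ Γ, γ₁ ≠ γ₂ →
      volume ((γ₁ +ᵥ W) ∩ (γ₂ +ᵥ W)) = 0 := by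
    intro γ₁ h₁ γ₂ h₂ hne
    have h0 : volume {z : EuclideanSpace ℝ (Fin n) |
        ¬ {γ ∈ Γ | z + γ ∈ W}.Subsingleton} = 0 := ae_iff.1 hpack
    refine measure_mono_null ?_ h0
    intro z hz
    obtain ⟨hz1, hz2⟩ := hz
    rw [Set.mem_vadd_set_iff_neg_vadd_mem] at hz1 hz2
    intro hsub
    have m1 : -γ₁ ∈ {γ ∈ Γ | z + γ ∈ W} := ⟨hΓneg _ h₁, by rwa [add_comm]⟩
    have m2 : -γ₂ ∈ {γ ∈ Γ | z + γ ∈ W} := ⟨hΓneg _ h₂, by rwa [add_comm]⟩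
    exact hne (neg_injective (hsub m1 m2))
  -- translates of S by A of distinct lattice vectors are a.e. disjoint
  have himg : ∀ γ : EuclideanSpace ℝ (Fin n), A γ +ᵥ (A '' W) = A '' (γ +ᵥ W) := by
    intro γ
    rw [← Set.image_vadd, ← Set.image_vadd, Set.image_image, Set.image_image]
    simp [map_add]
  have hT : ∀ γ₁ ∈ Γ, ∀ γ₂ ∈ Γ, γ₁ ≠ γ₂ →
      volume ((A γ₁ +ᵥ S) ∩ (A γ₂ +ᵥ S)) = 0 := by
    intro γ₁ h₁ γ₂ h₂ hne
    have hsub : (A γ₁ +ᵥ S) ∩ (A γ₂ +ᵥ S) ⊆ A '' ((γ₁ +ᵥ W) ∩ (γ₂ +ᵥ W)) := by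
      rw [Set.image_inter A.injective]
      refine Set.inter_subset_inter ?_ ?_ <;>
      · rw [← himg]
        exact Set.vadd_set_mono Set.inter_subset_right
    refine measure_mono_null hsub ?_
    have := Measure.addHaar_image_linearMap (volume : Measure (EuclideanSpace ℝ (Fin n)))
      A.toLinearMap ((γ₁ +ᵥ W) ∩ (γ₂ +ᵥ W))
    simp only [LinearEquiv.coe_coe] at this
    rw [this, hnull γ₁ h₁ γ₂ h₂ hne, mul_zero]
  -- the key counting bound
  have key : ∀ F : Finset (EuclideanSpace ℝ (Fin n)), ↑F ⊆ E →
      (F.card : ℝ≥0∞) * volume S ≤ C := by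
    intro F hF
    have hvol : ∀ γ : EuclideanSpace ℝ (Fin n), volume (A γ +ᵥ S) = volume S :=
      fun γ => measure_vadd _ _ _
    have hunion : volume (⋃ γ ∈ F, (A γ +ᵥ S)) = ∑ γ ∈ F, volume (A γ +ᵥ S) := by
      refine measure_biUnion_finset₀ ?_ (fun γ _ => (hmeasS.const_vadd _).nullMeasurableSet)
      intro γ₁ h₁ γ₂ h₂ hne
      exact hT γ₁ (hF h₁).2 γ₂ (hF h₂).2 hne
    have hsub : (⋃ γ ∈ F, (A γ +ᵥ S)) ⊆ Metric.ball x 2 := by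
      intro y hy
      simp only [Set.mem_iUnion] at hy
      obtain ⟨γ, hγF, hy⟩ := hy
      obtain ⟨s, hsS, rfl⟩ := hy
      have hAγ : A γ ∈ Metric.ball (0 : EuclideanSpace ℝ (Fin n)) 1 := by
        obtain ⟨y', hy', hy'eq⟩ := (hF hγF).1
        rw [← hy'eq]
        simpa using hy'
      have hdist : dist (A γ +ᵥ s) s = dist (A γ) 0 := by simp
      have hs1 : dist s x < 1 := hsS.1
      have : dist (A γ +ᵥ s) x ≤ dist (A γ +ᵥ s) s + dist s x := dist_triangle _ _ _
      rw [hdist] at this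
      have hb : dist (A γ) 0 < 1 := hAγ
      calc dist (A γ +ᵥ s) x ≤ dist (A γ) 0 + dist s x := this
        _ < 1 + 1 := by linarith
        _ = 2 := by norm_num
    calc (F.card : ℝ≥0∞) * volume S = ∑ γ ∈ F, volume (A γ +ᵥ S) := by
          simp [hvol, Finset.sum_const, nsmul_eq_mul]
      _ = volume (⋃ γ ∈ F, (A γ +ᵥ S)) := hunion.symm
      _ ≤ volume (Metric.ball x 2) := measure_mono hsub
      _ = C := by rw [hC, Measure.addHaar_ball_center]
  -- conclude
  rcases eq_or_ne E.encard ⊤ with htop | hfin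
  · rw [htop]
    simp only [ENat.toENNReal_top, ENNReal.div_top, nonpos_iff_eq_zero]
    by_contra hne
    obtain ⟨m, hm⟩ := ENNReal.exists_nat_gt
      (ENNReal.div_lt_top hCtop.ne hne).ne
    obtain ⟨t, htE, htcard⟩ := Set.exists_subset_encard_eq
      (le_top.trans_eq htop.symm : (m : ℕ∞) ≤ E.encard)
    have htfin : t.Finite := Set.finite_of_encard_eq_coe htcard
    have hcard : htfin.toFinset.card = m := by
      have := htfin.encard_eq_coe_toFinset_card
      rw [htcard] at this
      exact_mod_cast this.symm
    have hkey := key htfin.toFinset (by rwa [htfin.coe_toFinset])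
    rw [hcard] at hkey
    have : C < m * volume S :=
      (ENNReal.div_lt_iff (Or.inl hne) (Or.inl hStop.ne)).1 hm
    exact absurd hkey (not_le.2 this)
  · have hEfin : E.Finite := Set.encard_ne_top_iff.1 hfin
    have hkey := key hEfin.toFinset (by rw [hEfin.coe_toFinset])
    have hcast : ((E.encard : ℕ∞) : ℝ≥0∞) = (hEfin.toFinset.card : ℝ≥0∞) := by
      rw [hEfin.encard_eq_coe_toFinset_card]
      simp
    rw [hcast, ENNReal.le_div_iff_mul_le (Or.inr hC0.ne')
      (Or.inl (ENNReal.natCast_ne_top _)), mul_comm]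
    exact hkey
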